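/- Let A be an h-skew-adjoint ℂ-linear endomorphism of ℂ^{n+1}. Then there exist no real numbers λ₁, λ₂ and vectors e₁, f₁, e₂, f₂ ∈ ℂ^{n+1} with e₁, e₂ ℂ-linearly independent such that A e_j = iλ_j·e_j and A f_j = iλ_j·f_j + e_j for j = 1, 2; i.e. A has at most one Jordan block of size 2 for purely imaginary eigenvalues. -/
import Mathlib


open Complex

/-- The standard hermitian form of signature `(n,1)` on `ℂ^{n+1}`. -/
noncomputable def hForm (n : ℕ) (x y : Fin (n+1) → ℂ) : ℂ :=
  (∑ i : Fin n, x i.castSucc * (starRingEnd ℂ) (y i.castSucc))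
    - x (Fin.last n) * (starRingEnd ℂ) (y (Fin.last n))

/-- An endomorphism of `ℂ^{n+1}` is `h`-skew-adjoint if
`h(Ax,y) + h(x,Ay) = 0` for all `x, y`. -/
def IsHSkewAdjoint (n : ℕ) (A : (Fin (n+1) → ℂ) →ₗ[ℂ] (Fin (n+1) → ℂ)) : Prop :=
  ∀ x y : Fin (n+1) → ℂ, hForm n (A x) y + hForm n x (A y) = 0


lemma hForm_smul_left (n : ℕ) (c : ℂ) (x y : Fin (n+1) → ℂ) :
    hForm n (c • x) y = c * hForm n x y := by
  simp only [hForm, Pi.smul_apply, smul_eq_mul, mul_sub, Finset.mul_sum, mul_assoc]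

lemma hForm_conj (n : ℕ) (x y : Fin (n+1) → ℂ) :
    (starRingEnd ℂ) (hForm n x y) = hForm n y x := by
  simp only [hForm, map_sub, map_sum, map_mul, Complex.conj_conj]
  congr 1
  · exact Finset.sum_congr rfl fun i _ => mul_comm _ _
  · exact mul_comm _ _

lemma hForm_smul_right (n : ℕ) (c : ℂ) (x y : Fin (n+1) → ℂ) :
    hForm n x (c • y) = (starRingEnd ℂ) c * hForm n x y := by
  have := congrArg (starRingEnd ℂ) (hForm_smul_left n c y x)
  rw [map_mul, hForm_conj, hForm_conj] at this
  rw [← hForm_conj, hForm_conj] at this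
  exact this

lemma hForm_add_left (n : ℕ) (x x' y : Fin (n+1) → ℂ) :
    hForm n (x + x') y = hForm n x y + hForm n x' y := by
  simp [hForm, add_mul, Finset.sum_add_distrib]; ring

lemma hForm_add_right (n : ℕ) (x y y' : Fin (n+1) → ℂ) :
    hForm n x (y + y') = hForm n x y + hForm n x y' := by
  simp [hForm, mul_add, Finset.sum_add_distrib]; ring

lemma isotropic_last_zero (n : ℕ) (x : Fin (n+1) → ℂ)
    (h1 : hForm n x x = 0) (h2 : x (Fin.last n) = 0) : x = 0 := by
  have key : ∀ i : Fin n, x i.castSucc = 0 := by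
    have hc : (∑ i : Fin n, (Complex.normSq (x i.castSucc) : ℂ)) = 0 := by
      rw [← h1]; simp [hForm, h2, mul_comm, Complex.normSq_eq_conj_mul_self]
    have hr : (∑ i : Fin n, Complex.normSq (x i.castSucc)) = 0 := by
      exact_mod_cast hc
    intro i
    have := (Finset.sum_eq_zero_iff_of_nonneg
      (fun i _ => Complex.normSq_nonneg _)).mp hr i (Finset.mem_univ i)
    exact Complex.normSq_eq_zero.mp this
  funext i
  induction i using Fin.lastCases with
  | last => simpa using h2
  | cast j => simpa using key j

/-- an `h`-skew-adjoint endomorphism has at most one Jordan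
block of size `2` for purely imaginary eigenvalues: there are no two chains
`A eⱼ = iλⱼ eⱼ`, `A fⱼ = iλⱼ fⱼ + eⱼ` (`j = 1, 2`) with `e₁, e₂`
linearly independent. -/
theorem at_most_one_jordan_block_size_two (n : ℕ) (hn : 1 ≤ n)
    (A : (Fin (n+1) → ℂ) →ₗ[ℂ] (Fin (n+1) → ℂ)) (hA : IsHSkewAdjoint n A) :
    ¬ ∃ (lam₁ lam₂ : ℝ) (e₁ f₁ e₂ f₂ : Fin (n+1) → ℂ),
        LinearIndependent ℂ ![e₁, e₂] ∧
        A e₁ = (Complex.I * (lam₁ : ℂ)) • e₁ ∧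
        A f₁ = (Complex.I * (lam₁ : ℂ)) • f₁ + e₁ ∧
        A e₂ = (Complex.I * (lam₂ : ℂ)) • e₂ ∧
        A f₂ = (Complex.I * (lam₂ : ℂ)) • f₂ + e₂ := by
  rintro ⟨l₁, l₂, e₁, f₁, e₂, f₂, hind, he₁, hf₁, he₂, hf₂⟩
  set μ₁ : ℂ := Complex.I * (l₁ : ℂ) with hμ₁
  set μ₂ : ℂ := Complex.I * (l₂ : ℂ) with hμ₂
  have hc₁ : (starRingEnd ℂ) μ₁ = -μ₁ := by simp [hμ₁]
  have hc₂ : (starRingEnd ℂ) μ₂ = -μ₂ := by simp [hμ₂]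
  -- each e_j is isotropic
  have hiso : ∀ (μ : ℂ) (e f : Fin (n+1) → ℂ), (starRingEnd ℂ) μ = -μ →
      A e = μ • e → A f = μ • f + e → hForm n e e = 0 := by
    intro μ e f hc he hf
    have h := hA e f
    rw [he, hf, hForm_smul_left, hForm_add_right, hForm_smul_right, hc] at h
    linear_combination h
  have h11 : hForm n e₁ e₁ = 0 := hiso μ₁ e₁ f₁ hc₁ he₁ hf₁
  have h22 : hForm n e₂ e₂ = 0 := hiso μ₂ e₂ f₂ hc₂ he₂ hf₂
  -- h(e₁,e₂) = 0
  have eq1 := hA e₁ e₂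
  rw [he₁, he₂, hForm_smul_left, hForm_smul_right, hc₂] at eq1
  have eq2 := hA e₁ f₂
  rw [he₁, hf₂, hForm_smul_left, hForm_add_right, hForm_smul_right, hc₂] at eq2
  have h12 : hForm n e₁ e₂ = 0 := by
    have hsq : hForm n e₁ e₂ * hForm n e₁ e₂ = 0 := by
      linear_combination hForm n e₁ e₂ * eq2 - hForm n e₁ f₂ * eq1
    exact mul_self_eq_zero.mp hsq
  have h21 : hForm n e₂ e₁ = 0 := by rw [← hForm_conj, h12, map_zero]
  -- the combination killing the last coordinate
  set a : ℂ := e₂ (Fin.last n) with ha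
  set b : ℂ := -(e₁ (Fin.last n)) with hb
  set v : Fin (n+1) → ℂ := a • e₁ + b • e₂ with hv
  have hvv : hForm n v v = 0 := by
    simp only [hv, hForm_add_left, hForm_add_right, hForm_smul_left,
      hForm_smul_right, h11, h22, h12, h21]
    ring
  have hvlast : v (Fin.last n) = 0 := by simp [hv, ha, hb]; ring
  have hv0 : v = 0 := isotropic_last_zero n v hvv hvlast
  have hpair := LinearIndependent.pair_iff.mp hind a b (by rw [← hv]; exact hv0)
  -- so e₁'s last coordinate is 0, hence e₁ = 0
  have he₁last : e₁ (Fin.last n) = 0 := by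
    have := hpair.2; rw [hb] at this; exact neg_eq_zero.mp this
  have he₁0 : e₁ = 0 := isotropic_last_zero n e₁ h11 he₁last
  have := (LinearIndependent.pair_iff.mp hind 1 0 (by simp [he₁0])).1
  exact one_ne_zero this
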